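/- For every n ≥ 2, the submonoid M_n := φ₃⁻¹(identity) of STVB_n is generated as a monoid by the elements λ_{k,l}, λ̄_{k,l} and z_{k,l} for 1 ≤ k ≠ l ≤ n together with γ_1,…,γ_n. -/

import Mathlib

namespace SingTVB

/-- Generators of the singular twisted virtual braid monoid `STVB n`
(0-based indexing: `sig i` is the paper's σ_{i+1}, `gam j` is the paper's γ_{j+1}). -/
inductive Gen (n : ℕ) : Type
  | sig : Fin (n - 1) → Gen n
  | sigb : Fin (n - 1) → Gen n
  | rho : Fin (n - 1) → Gen n
  | tau : Fin (n - 1) → Gen n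
  | gam : Fin n → Gen n

abbrev FM (n : ℕ) := FreeMonoid (Gen n)

/-- The strand `i` (lower strand of the `i`-th crossing), as an element of `Fin n`. -/
def fa {n : ℕ} (i : Fin (n - 1)) : Fin n := ⟨i.val, by have := i.isLt; omega⟩
/-- The strand `i+1` (upper strand of the `i`-th crossing), as an element of `Fin n`. -/
def fb {n : ℕ} (i : Fin (n - 1)) : Fin n := ⟨i.val + 1, by have := i.isLt; omega⟩

def Ws {n : ℕ} (i : Fin (n - 1)) : FM n := FreeMonoid.of (Gen.sig i)
def Wsb {n : ℕ} (i : Fin (n - 1)) : FM n := FreeMonoid.of (Gen.sigb i)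
def Wr {n : ℕ} (i : Fin (n - 1)) : FM n := FreeMonoid.of (Gen.rho i)
def Wt {n : ℕ} (i : Fin (n - 1)) : FM n := FreeMonoid.of (Gen.tau i)
def Wg {n : ℕ} (j : Fin n) : FM n := FreeMonoid.of (Gen.gam j)

/-- `|i - j| > 1`. -/
def Far {m : ℕ} (i j : Fin m) : Prop := i.val + 1 < j.val ∨ j.val + 1 < i.val

/-- Defining relations of the singular twisted virtual braid monoid. -/
inductive Rel (n : ℕ) : FM n → FM n → Prop
  | ss {i j : Fin (n - 1)} (h : Far i j) : Rel n (Ws i * Ws j) (Ws j * Ws i)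
  | rr {i j : Fin (n - 1)} (h : Far i j) : Rel n (Wr i * Wr j) (Wr j * Wr i)
  | sr {i j : Fin (n - 1)} (h : Far i j) : Rel n (Ws i * Wr j) (Wr j * Ws i)
  | tt {i j : Fin (n - 1)} (h : Far i j) : Rel n (Wt i * Wt j) (Wt j * Wt i)
  | st {i j : Fin (n - 1)} (h : Far i j) : Rel n (Ws i * Wt j) (Wt j * Ws i)
  | tr {i j : Fin (n - 1)} (h : Far i j) : Rel n (Wt i * Wr j) (Wr j * Wt i)
  | sss {i j : Fin (n - 1)} (h : j.val = i.val + 1) :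
      Rel n (Ws i * Ws j * Ws i) (Ws j * Ws i * Ws j)
  | rrr {i j : Fin (n - 1)} (h : j.val = i.val + 1) :
      Rel n (Wr i * Wr j * Wr i) (Wr j * Wr i * Wr j)
  | rsr {i j : Fin (n - 1)} (h : j.val = i.val + 1) :
      Rel n (Wr i * Ws j * Wr i) (Wr j * Ws i * Wr j)
  | rtr {i j : Fin (n - 1)} (h : j.val = i.val + 1) :
      Rel n (Wr i * Wt j * Wr i) (Wr j * Wt i * Wr j)
  | sst {i j : Fin (n - 1)} (h : j.val = i.val + 1) :
      Rel n (Ws i * Ws j * Wt i) (Wt j * Ws i * Ws j)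
  | sst' {i j : Fin (n - 1)} (h : j.val = i.val + 1) :
      Rel n (Ws j * Ws i * Wt j) (Wt i * Ws j * Ws i)
  | rho2 (i : Fin (n - 1)) : Rel n (Wr i * Wr i) 1
  | ssb (i : Fin (n - 1)) : Rel n (Ws i * Wsb i) 1
  | sbs (i : Fin (n - 1)) : Rel n (Wsb i * Ws i) 1
  | stc (i : Fin (n - 1)) : Rel n (Ws i * Wt i) (Wt i * Ws i)
  | grel (i : Fin (n - 1)) : Rel n (Wg (fb i) * Wr i) (Wr i * Wg (fa i))
  | rsrg (i : Fin (n - 1)) :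
      Rel n (Wr i * Ws i * Wr i) (Wg (fb i) * Wg (fa i) * Ws i * Wg (fa i) * Wg (fb i))
  | rtrg (i : Fin (n - 1)) :
      Rel n (Wr i * Wt i * Wr i) (Wg (fb i) * Wg (fa i) * Wt i * Wg (fa i) * Wg (fb i))
  | g2 (j : Fin n) : Rel n (Wg j * Wg j) 1
  | gg (i j : Fin n) : Rel n (Wg i * Wg j) (Wg j * Wg i)
  | grc {i : Fin (n - 1)} {j : Fin n} (h1 : j ≠ fa i) (h2 : j ≠ fb i) :
      Rel n (Wg j * Wr i) (Wr i * Wg j)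
  | sgc {i : Fin (n - 1)} {j : Fin n} (h1 : j ≠ fa i) (h2 : j ≠ fb i) :
      Rel n (Ws i * Wg j) (Wg j * Ws i)
  | tgc {i : Fin (n - 1)} {j : Fin n} (h1 : j ≠ fa i) (h2 : j ≠ fb i) :
      Rel n (Wt i * Wg j) (Wg j * Wt i)

/-- The singular twisted virtual braid monoid on `n` strands. -/
abbrev STVB (n : ℕ) := PresentedMonoid (Rel n)

def mkS (n : ℕ) : FM n →* STVB n := PresentedMonoid.mk (Rel n)

def sigE (n : ℕ) (i : Fin (n - 1)) : STVB n := mkS n (Ws i)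
def sigbE (n : ℕ) (i : Fin (n - 1)) : STVB n := mkS n (Wsb i)
def rhoE (n : ℕ) (i : Fin (n - 1)) : STVB n := mkS n (Wr i)
def tauE (n : ℕ) (i : Fin (n - 1)) : STVB n := mkS n (Wt i)
def gamE (n : ℕ) (j : Fin n) : STVB n := mkS n (Wg j)

/-- The transposition `(i, i+1)` in the symmetric group on `Fin n`. -/
def swp {n : ℕ} (i : Fin (n - 1)) : Equiv.Perm (Fin n) := Equiv.swap (fa i) (fb i)

end SingTVB
namespace SingTVB

/-- ρ-generator word with a natural-number (0-based) index; junk value `1` out of range. -/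
def WrN (n : ℕ) (k : ℕ) : FM n := if h : k < n - 1 then Wr ⟨k, h⟩ else 1
def WsN (n : ℕ) (k : ℕ) : FM n := if h : k < n - 1 then Ws ⟨k, h⟩ else 1
def WsbN (n : ℕ) (k : ℕ) : FM n := if h : k < n - 1 then Wsb ⟨k, h⟩ else 1
def WtN (n : ℕ) (k : ℕ) : FM n := if h : k < n - 1 then Wt ⟨k, h⟩ else 1

/-- The ascending word `ρ_{i+1} ρ_{i+2} ⋯ ρ_{j-1}` (0-based strand indices `i < j`). -/
def asc (n i j : ℕ) : FM n := ((List.range' (i + 1) (j - 1 - i)).map (WrN n)).prod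
/-- The descending word `ρ_{j-1} ρ_{j-2} ⋯ ρ_{i+1}` (0-based strand indices `i < j`). -/
def desc (n i j : ℕ) : FM n := ((List.range' (i + 1) (j - 1 - i)).reverse.map (WrN n)).prod

/-- The word for the generator `λ_{i,j}` (0-based strands `i ≠ j`), built from
`λ_{i,i+1} = ρ_i σ̄_i` and `λ_{i+1,i} = ρ_i λ_{i,i+1} ρ_i` by conjugation. -/
def lamW (n i j : ℕ) : FM n :=
  if i < j then desc n i j * (WrN n i * WsbN n i) * asc n i j
  else desc n j i * (WrN n j * (WrN n j * WsbN n j) * WrN n j) * asc n j i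

/-- The word for `λ̄_{i,j}`, built from `λ̄_{i,i+1} = σ_i ρ_i`. -/
def lamBarW (n i j : ℕ) : FM n :=
  if i < j then desc n i j * (WsN n i * WrN n i) * asc n i j
  else desc n j i * (WrN n j * (WsN n j * WrN n j) * WrN n j) * asc n j i

/-- The word for `y_{i,j}`, built from `y_{i,i+1} = τ_i ρ_i`. -/
def yW (n i j : ℕ) : FM n :=
  if i < j then desc n i j * (WtN n i * WrN n i) * asc n i j
  else desc n j i * (WrN n j * (WtN n j * WrN n j) * WrN n j) * asc n j i

/-- The word for `x_{i,j}`, built from `x_{i,i+1} = σ_i` and `x_{i+1,i} = ρ_i σ_i ρ_i`. -/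
def xW (n i j : ℕ) : FM n :=
  if i < j then desc n i j * WsN n i * asc n i j
  else desc n j i * (WrN n j * WsN n j * WrN n j) * asc n j i

/-- The word for `x̄_{i,j}`, with `σ̄` in place of `σ`. -/
def xBarW (n i j : ℕ) : FM n :=
  if i < j then desc n i j * WsbN n i * asc n i j
  else desc n j i * (WrN n j * WsbN n j * WrN n j) * asc n j i

/-- The word for `z_{i,j}`, built from `z_{i,i+1} = τ_i` and `z_{i+1,i} = ρ_i τ_i ρ_i`. -/
def zW (n i j : ℕ) : FM n :=
  if i < j then desc n i j * WtN n i * asc n i j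
  else desc n j i * (WrN n j * WtN n j * WrN n j) * asc n j i

def lam (n : ℕ) (i j : Fin n) : STVB n := mkS n (lamW n i j)
def lamBar (n : ℕ) (i j : Fin n) : STVB n := mkS n (lamBarW n i j)
def yel (n : ℕ) (i j : Fin n) : STVB n := mkS n (yW n i j)
def xel (n : ℕ) (i j : Fin n) : STVB n := mkS n (xW n i j)
def xBar (n : ℕ) (i j : Fin n) : STVB n := mkS n (xBarW n i j)
def zel (n : ℕ) (i j : Fin n) : STVB n := mkS n (zW n i j)

end SingTVB
namespace SingTVB

variable {n : ℕ}

theorem rel_eq {u v : FM n} (h : Rel n u v) : mkS n u = mkS n v :=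
  Quotient.sound (ConGen.Rel.of _ _ h)

/-- ρ letter, ℕ-indexed. -/
noncomputable def rE (n i : ℕ) : STVB n := mkS n (WrN n i)
noncomputable def sE (n i : ℕ) : STVB n := mkS n (WsN n i)
noncomputable def sbE (n i : ℕ) : STVB n := mkS n (WsbN n i)
noncomputable def tE (n i : ℕ) : STVB n := mkS n (WtN n i)
noncomputable def gE (n j : ℕ) : STVB n := mkS n (if h : j < n then Wg ⟨j, h⟩ else 1)

theorem rE_def (i : ℕ) (h : i < n - 1) : rE n i = mkS n (Wr ⟨i, h⟩) := by
  rw [rE, WrN, dif_pos h]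

theorem rE_junk (i : ℕ) (h : ¬ i < n - 1) : rE n i = 1 := by
  rw [rE, WrN, dif_neg h]; exact map_one _

theorem rr1 (i : ℕ) : rE n i * rE n i = 1 := by
  by_cases h : i < n - 1
  · rw [rE_def i h, ← map_mul, rel_eq (Rel.rho2 ⟨i, h⟩), map_one]
  · rw [rE_junk i h, one_mul]

theorem ssb1 (i : ℕ) : sE n i * sbE n i = 1 := by
  by_cases h : i < n - 1
  · rw [sE, sbE, WsN, WsbN, dif_pos h, dif_pos h, ← map_mul,
      rel_eq (Rel.ssb ⟨i, h⟩), map_one]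
  · rw [sE, sbE, WsN, WsbN, dif_neg h, dif_neg h, map_one, one_mul]

theorem sbs1 (i : ℕ) : sbE n i * sE n i = 1 := by
  by_cases h : i < n - 1
  · rw [sE, sbE, WsN, WsbN, dif_pos h, dif_pos h, ← map_mul,
      rel_eq (Rel.sbs ⟨i, h⟩), map_one]
  · rw [sE, sbE, WsN, WsbN, dif_neg h, dif_neg h, map_one, one_mul]

/-- far commutation of ρ with ρ : unconditional given gap. -/
theorem rr_far {i j : ℕ} (hij : i + 2 ≤ j) : rE n i * rE n j = rE n j * rE n i := by
  by_cases hj : j < n - 1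
  · have hi : i < n - 1 := by omega
    rw [rE_def i hi, rE_def j hj, ← map_mul, ← map_mul,
      rel_eq (Rel.rr (i := ⟨i, hi⟩) (j := ⟨j, hj⟩) (Or.inl (by simp; omega)))]
  · rw [rE_junk j hj, one_mul, mul_one]

theorem sr_far {i j : ℕ} (hij : i + 2 ≤ j ∨ j + 2 ≤ i) :
    sE n i * rE n j = rE n j * sE n i := by
  by_cases hj : j < n - 1
  · by_cases hi : i < n - 1
    · rw [rE_def j hj, sE, WsN, dif_pos hi, ← map_mul, ← map_mul,
        rel_eq (Rel.sr (i := ⟨i, hi⟩) (j := ⟨j, hj⟩) (by unfold Far; simp; omega))]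
    · rw [sE, WsN, dif_neg hi, map_one, one_mul, mul_one]
  · rw [rE_junk j hj, one_mul, mul_one]

end SingTVB
namespace SingTVB
variable {n : ℕ}

theorem tr_far {i j : ℕ} (hij : i + 2 ≤ j ∨ j + 2 ≤ i) :
    tE n i * rE n j = rE n j * tE n i := by
  by_cases hj : j < n - 1
  · by_cases hi : i < n - 1
    · rw [rE_def j hj, tE, WtN, dif_pos hi, ← map_mul, ← map_mul,
        rel_eq (Rel.tr (i := ⟨i, hi⟩) (j := ⟨j, hj⟩) (by unfold Far; simp; omega))]
    · rw [tE, WtN, dif_neg hi, map_one, one_mul, mul_one]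
  · rw [rE_junk j hj, one_mul, mul_one]

theorem sbr_far {i j : ℕ} (hij : i + 2 ≤ j ∨ j + 2 ≤ i) :
    sbE n i * rE n j = rE n j * sbE n i := by
  have h1 : sbE n i * rE n j = sbE n i * rE n j * (sE n i * sbE n i) := by
    rw [ssb1, mul_one]
  calc sbE n i * rE n j = sbE n i * (rE n j * sE n i) * sbE n i := by
        rw [h1]; group
    _ = sbE n i * (sE n i * rE n j) * sbE n i := by rw [← sr_far hij]
    _ = rE n j * sbE n i := by
        rw [← mul_assoc, sbs1, one_mul]

theorem braidE {i : ℕ} (h : i + 2 ≤ n - 1) :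
    rE n i * rE n (i+1) * rE n i = rE n (i+1) * rE n i * rE n (i+1) := by
  have hi : i < n - 1 := by omega
  have hi1 : i + 1 < n - 1 := by omega
  rw [rE_def i hi, rE_def (i+1) hi1, ← map_mul, ← map_mul, ← map_mul, ← map_mul,
    rel_eq (Rel.rrr (i := ⟨i, hi⟩) (j := ⟨i+1, hi1⟩) rfl)]

theorem rsrE {i : ℕ} (h : i + 2 ≤ n - 1) :
    rE n i * sE n (i+1) * rE n i = rE n (i+1) * sE n i * rE n (i+1) := by
  have hi : i < n - 1 := by omega
  have hi1 : i + 1 < n - 1 := by omega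
  rw [rE_def i hi, rE_def (i+1) hi1, sE, sE, WsN, WsN, dif_pos hi, dif_pos hi1,
    ← map_mul, ← map_mul, ← map_mul, ← map_mul,
    rel_eq (Rel.rsr (i := ⟨i, hi⟩) (j := ⟨i+1, hi1⟩) rfl)]

theorem rtrE {i : ℕ} (h : i + 2 ≤ n - 1) :
    rE n i * tE n (i+1) * rE n i = rE n (i+1) * tE n i * rE n (i+1) := by
  have hi : i < n - 1 := by omega
  have hi1 : i + 1 < n - 1 := by omega
  rw [rE_def i hi, rE_def (i+1) hi1, tE, tE, WtN, WtN, dif_pos hi, dif_pos hi1,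
    ← map_mul, ← map_mul, ← map_mul, ← map_mul,
    rel_eq (Rel.rtr (i := ⟨i, hi⟩) (j := ⟨i+1, hi1⟩) rfl)]

theorem rsbrE {i : ℕ} (h : i + 2 ≤ n - 1) :
    rE n i * sbE n (i+1) * rE n i = rE n (i+1) * sbE n i * rE n (i+1) := by
  -- both sides are two-sided inverses of the corresponding sides of rsrE
  have k1 : (rE n i * sE n (i+1) * rE n i) * (rE n i * sbE n (i+1) * rE n i) = 1 := by
    calc rE n i * sE n (i+1) * rE n i * (rE n i * sbE n (i+1) * rE n i)
        = rE n i * sE n (i+1) * (rE n i * rE n i) * sbE n (i+1) * rE n i := by group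
      _ = rE n i * (sE n (i+1) * sbE n (i+1)) * rE n i := by rw [rr1]; group
      _ = 1 := by rw [ssb1, mul_one, rr1]
  have k2 : (rE n (i+1) * sbE n i * rE n (i+1)) * (rE n (i+1) * sE n i * rE n (i+1)) = 1 := by
    calc rE n (i+1) * sbE n i * rE n (i+1) * (rE n (i+1) * sE n i * rE n (i+1))
        = rE n (i+1) * sbE n i * (rE n (i+1) * rE n (i+1)) * sE n i * rE n (i+1) := by group
      _ = rE n (i+1) * (sbE n i * sE n i) * rE n (i+1) := by rw [rr1]; group
      _ = 1 := by rw [sbs1, mul_one, rr1]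
  calc rE n i * sbE n (i+1) * rE n i
      = ((rE n (i+1) * sbE n i * rE n (i+1)) * (rE n (i+1) * sE n i * rE n (i+1))) *
        (rE n i * sbE n (i+1) * rE n i) := by rw [k2, one_mul]
    _ = (rE n (i+1) * sbE n i * rE n (i+1)) *
        ((rE n i * sE n (i+1) * rE n i) * (rE n i * sbE n (i+1) * rE n i)) := by
        rw [← rsrE h]; group
    _ = rE n (i+1) * sbE n i * rE n (i+1) := by rw [k1, mul_one]

end SingTVB
namespace SingTVB
variable {n : ℕ}

theorem gE_def (j : ℕ) (h : j < n) : gE n j = mkS n (Wg ⟨j, h⟩) := by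
  rw [gE, dif_pos h]

theorem gE_junk (j : ℕ) (h : ¬ j < n) : gE n j = 1 := by
  rw [gE, dif_neg h]; exact map_one _

/-- swap on ℕ indices -/
def swN (m j : ℕ) : ℕ := if j = m then m + 1 else if j = m + 1 then m else j

theorem grelE {m : ℕ} (hm : m < n - 1) :
    gE n (m+1) * rE n m = rE n m * gE n m := by
  have h1 : m + 1 < n := by omega
  have h0 : m < n := by omega
  rw [gE_def (m+1) h1, gE_def m h0, rE_def m hm, ← map_mul, ← map_mul]
  have : fb ⟨m, hm⟩ = (⟨m+1, h1⟩ : Fin n) := rfl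
  have h2 : fa ⟨m, hm⟩ = (⟨m, h0⟩ : Fin n) := rfl
  rw [← this, ← h2]
  exact rel_eq (Rel.grel ⟨m, hm⟩)

theorem rgr_conj {m j : ℕ} (hm : m < n - 1) :
    rE n m * gE n j * rE n m = gE n (swN m j) := by
  rcases eq_or_ne j m with rfl | hjm
  · -- g (m+1) = r m * g m * r m
    rw [swN, if_pos rfl]
    rw [← grelE hm, mul_assoc, rr1, mul_one]
  rcases eq_or_ne j (m+1) with rfl | hjm1
  · rw [swN, if_neg hjm, if_pos rfl, mul_assoc, grelE hm, ← mul_assoc, rr1, one_mul]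
  · rw [swN, if_neg hjm, if_neg hjm1]
    by_cases hj : j < n
    · have comm : gE n j * rE n m = rE n m * gE n j := by
        rw [gE_def j hj, rE_def m hm, ← map_mul, ← map_mul]
        refine rel_eq (Rel.grc (i := ⟨m, hm⟩) (j := ⟨j, hj⟩) ?_ ?_)
        · intro hh; apply hjm; exact congrArg Fin.val hh
        · intro hh; apply hjm1; exact congrArg Fin.val hh
      rw [mul_assoc, comm, ← mul_assoc, rr1, one_mul]
    · rw [gE_junk j hj, mul_one, rr1]

end SingTVB
namespace SingTVB
variable {n : ℕ}

theorem rr_far' {i j : ℕ} (hij : i + 2 ≤ j ∨ j + 2 ≤ i) :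
    rE n i * rE n j = rE n j * rE n i := by
  rcases hij with h | h
  · exact rr_far h
  · exact (rr_far h).symm

noncomputable def dE (n a b : ℕ) : STVB n := mkS n (desc n a b)
noncomputable def eE (n a b : ℕ) : STVB n := mkS n (asc n a b)

theorem desc_triv {a b : ℕ} (h : b ≤ a + 1) : desc n a b = 1 := by
  unfold desc
  have : b - 1 - a = 0 := by omega
  rw [this]; rfl

theorem asc_triv {a b : ℕ} (h : b ≤ a + 1) : asc n a b = 1 := by
  unfold asc
  have : b - 1 - a = 0 := by omega
  rw [this]; rfl

theorem dE_triv {a b : ℕ} (h : b ≤ a + 1) : dE n a b = 1 := by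
  rw [dE, desc_triv h]; exact map_one _

theorem eE_triv {a b : ℕ} (h : b ≤ a + 1) : eE n a b = 1 := by
  rw [eE, asc_triv h]; exact map_one _

theorem desc_top {a b : ℕ} (h : a + 1 ≤ b) :
    desc n a (b+1) = WrN n b * desc n a b := by
  unfold desc
  have h1 : b + 1 - 1 - a = (b - 1 - a) + 1 := by omega
  rw [h1, List.range'_concat]
  have h2 : a + 1 + 1 * (b - 1 - a) = b := by omega
  rw [h2, List.reverse_append, List.reverse_singleton, List.singleton_append,
    List.map_cons, List.prod_cons]

theorem asc_top {a b : ℕ} (h : a + 1 ≤ b) :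
    asc n a (b+1) = asc n a b * WrN n b := by
  unfold asc
  have h1 : b + 1 - 1 - a = (b - 1 - a) + 1 := by omega
  rw [h1, List.range'_concat]
  have h2 : a + 1 + 1 * (b - 1 - a) = b := by omega
  rw [h2, List.map_append, List.prod_append, List.map_singleton, List.prod_singleton]

theorem desc_bot {a b : ℕ} (h : a + 2 ≤ b) :
    desc n a b = desc n (a+1) b * WrN n (a+1) := by
  unfold desc
  have h1 : b - 1 - a = (b - 1 - (a+1)) + 1 := by omega
  rw [h1, List.range'_succ, List.reverse_cons, List.map_append, List.prod_append,
    List.map_singleton, List.prod_singleton]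

theorem asc_bot {a b : ℕ} (h : a + 2 ≤ b) :
    asc n a b = WrN n (a+1) * asc n (a+1) b := by
  unfold asc
  have h1 : b - 1 - a = (b - 1 - (a+1)) + 1 := by omega
  rw [h1, List.range'_succ, List.map_cons, List.prod_cons]

theorem dE_top {a b : ℕ} (h : a + 1 ≤ b) : dE n a (b+1) = rE n b * dE n a b := by
  rw [dE, desc_top h, map_mul]; rfl

theorem eE_top {a b : ℕ} (h : a + 1 ≤ b) : eE n a (b+1) = eE n a b * rE n b := by
  rw [eE, asc_top h, map_mul]; rfl

theorem dE_bot {a b : ℕ} (h : a + 2 ≤ b) : dE n a b = dE n (a+1) b * rE n (a+1) := by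
  rw [dE, desc_bot h, map_mul]; rfl

theorem eE_bot {a b : ℕ} (h : a + 2 ≤ b) : eE n a b = rE n (a+1) * eE n (a+1) b := by
  rw [eE, asc_bot h, map_mul]; rfl

theorem de_one (a : ℕ) : ∀ b : ℕ, dE n a b * eE n a b = 1 ∧ eE n a b * dE n a b = 1 := by
  intro b
  induction b with
  | zero => rw [dE_triv (by omega), eE_triv (by omega)]; simp
  | succ c ih =>
    by_cases h : a + 1 ≤ c
    · obtain ⟨ih1, ih2⟩ := ih
      constructor
      · rw [dE_top h, eE_top h, mul_assoc, ← mul_assoc (dE n a c), ih1, one_mul, rr1]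
      · rw [dE_top h, eE_top h, mul_assoc, ← mul_assoc (rE n c), rr1, one_mul, ih2]
    · rw [dE_triv (by omega), eE_triv (by omega)]; simp

theorem dE_far {a b j : ℕ} (h : j + 1 ≤ a ∨ b + 1 ≤ j) :
    rE n j * dE n a b = dE n a b * rE n j := by
  induction b with
  | zero => rw [dE_triv (by omega)]; simp
  | succ c ih =>
    by_cases hc : a + 1 ≤ c
    · rw [dE_top hc, ← mul_assoc, rr_far' (by omega), mul_assoc, ih (by omega),
        ← mul_assoc]
    · rw [dE_triv (by omega)]; simp

theorem eE_far {a b j : ℕ} (h : j + 1 ≤ a ∨ b + 1 ≤ j) :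
    rE n j * eE n a b = eE n a b * rE n j := by
  have h1 := (de_one (n := n) a b).1
  have h2 := (de_one (n := n) a b).2
  calc rE n j * eE n a b = (eE n a b * dE n a b) * (rE n j * eE n a b) := by
        rw [h2, one_mul]
    _ = eE n a b * ((dE n a b * rE n j) * eE n a b) := by
        simp only [mul_assoc]
    _ = eE n a b * ((rE n j * dE n a b) * eE n a b) := by rw [← dE_far h]
    _ = eE n a b * rE n j := by
        rw [mul_assoc, h1, mul_one]

theorem dE_shuf {a j : ℕ} (haj : a + 1 ≤ j) :
    ∀ b, j + 2 ≤ b → b ≤ n - 1 → rE n j * dE n a b = dE n a b * rE n (j+1) := by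
  intro b
  induction b with
  | zero => omega
  | succ c ih =>
    intro hb hbn
    rcases eq_or_lt_of_le hb with heq | hlt
    · -- c + 1 = j + 2, i.e. c = j + 1 : base case
      have hc : c = j + 1 := by omega
      subst hc
      rw [dE_top (by omega), dE_top (by omega), ← mul_assoc, ← mul_assoc,
        braidE (by omega)]
      rw [mul_assoc (rE n (j+1) * rE n j), dE_far (n := n) (a := a) (b := j) (j := j+1)
        (by omega), ← mul_assoc, mul_assoc]
      simp only [mul_assoc]
    · have hc : j + 2 ≤ c := by omega
      rw [dE_top (by omega), ← mul_assoc, rr_far' (by omega), mul_assoc,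
        ih hc (by omega), ← mul_assoc]

theorem eE_shuf {a j b : ℕ} (haj : a + 1 ≤ j) (hb : j + 2 ≤ b) (hbn : b ≤ n - 1) :
    rE n (j+1) * eE n a b = eE n a b * rE n j := by
  have h1 := (de_one (n := n) a b).1
  have h2 := (de_one (n := n) a b).2
  calc rE n (j+1) * eE n a b
      = (eE n a b * dE n a b) * (rE n (j+1) * eE n a b) := by rw [h2, one_mul]
    _ = eE n a b * ((dE n a b * rE n (j+1)) * eE n a b) := by simp only [mul_assoc]
    _ = eE n a b * ((rE n j * dE n a b) * eE n a b) := by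
        rw [← dE_shuf haj b hb hbn]
    _ = eE n a b * rE n j := by rw [mul_assoc, h1, mul_one]

end SingTVB
namespace SingTVB
variable {n : ℕ}

section helpers
variable {M : Type*} [Monoid M]

theorem conj_shuffle {x x' p y q : M} (hx : x * x = 1) (hp : x * p = p * x')
    (hy : x' * y = y * x') (hq : x' * q = q * x) : x * (p * y * q) * x = p * y * q := by
  calc x * (p * y * q) * x = ((x * p) * y * q) * x := by simp only [mul_assoc]
    _ = ((p * x') * y * q) * x := by rw [hp]
    _ = (p * (x' * y) * q) * x := by simp only [mul_assoc]
    _ = (p * (y * x') * q) * x := by rw [hy]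
    _ = p * y * ((x' * q) * x) := by simp only [mul_assoc]
    _ = p * y * ((q * x) * x) := by rw [hq]
    _ = p * y * q := by simp only [mul_assoc]; rw [hx, mul_one]

theorem conj_mid {x p y q : M} (hp : x * p = p * x) (hq : x * q = q * x) :
    x * (p * y * q) * x = p * (x * y * x) * q := by
  calc x * (p * y * q) * x = ((x * p) * y * q) * x := by simp only [mul_assoc]
    _ = ((p * x) * y * q) * x := by rw [hp]
    _ = p * (x * y) * ((q * x)) := by simp only [mul_assoc]
    _ = p * (x * y) * ((x * q)) := by rw [hq]
    _ = p * (x * y * x) * q := by simp only [mul_assoc]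

end helpers

/-- conjugation core shape: `d a b * y a * e a b`. -/
noncomputable def TT (n : ℕ) (y : ℕ → STVB n) (a b : ℕ) : STVB n :=
  dE n a b * y a * eE n a b

section SM
variable (y : ℕ → STVB n)
variable (Hfar : ∀ a m : ℕ, m + 2 ≤ a ∨ a + 2 ≤ m → rE n m * y a = y a * rE n m)
variable (Hbr : ∀ a : ℕ, a + 2 ≤ n - 1 →
  rE n a * y (a+1) * rE n a = rE n (a+1) * y a * rE n (a+1))

include Hfar in
theorem SM0 {a b m : ℕ} (hab : a < b) (h : m + 1 < a ∨ b < m) :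
    rE n m * TT n y a b * rE n m = TT n y a b :=
  conj_shuffle (rr1 m) (dE_far (by omega)) (Hfar a m (by omega)) (eE_far (by omega))

include Hfar in
theorem SMint {a b m : ℕ} (hb : b ≤ n - 1) (h1 : a + 1 ≤ m) (h2 : m + 2 ≤ b) :
    rE n m * TT n y a b * rE n m = TT n y a b :=
  conj_shuffle (rr1 m) (dE_shuf (by omega) b h2 hb) (Hfar a (m+1) (by omega))
    (eE_shuf (by omega) h2 hb)

theorem SMiii {a b : ℕ} (hab : a + 2 ≤ b) :
    rE n (b-1) * TT n y a b * rE n (b-1) = TT n y a (b-1) := by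
  have hb : b = (b - 1) + 1 := by omega
  have hd : dE n a b = rE n (b-1) * dE n a (b-1) := by
    rw [hb]; exact dE_top (by omega)
  have he : eE n a b = eE n a (b-1) * rE n (b-1) := by
    rw [hb]; exact eE_top (by omega)
  calc rE n (b-1) * TT n y a b * rE n (b-1)
      = rE n (b-1) * (rE n (b-1) * dE n a (b-1) * y a * (eE n a (b-1) * rE n (b-1)))
        * rE n (b-1) := by rw [TT, hd, he]
    _ = (rE n (b-1) * rE n (b-1)) * (dE n a (b-1) * y a * eE n a (b-1)) *
        (rE n (b-1) * rE n (b-1)) := by simp only [mul_assoc]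
    _ = TT n y a (b-1) := by rw [rr1, one_mul, mul_one, TT]

theorem SMiv {a b : ℕ} (hab : a < b) :
    rE n b * TT n y a b * rE n b = TT n y a (b+1) := by
  rw [TT, TT, dE_top (by omega : a + 1 ≤ b), eE_top (by omega : a + 1 ≤ b)]
  simp only [mul_assoc]

include Hbr in
theorem SMv {a b : ℕ} (ha : 1 ≤ a) (hab : a < b) (hb : b ≤ n - 1) :
    rE n (a-1) * TT n y a b * rE n (a-1) = TT n y (a-1) b := by
  have h1 : rE n (a-1) * TT n y a b * rE n (a-1)
      = dE n a b * (rE n (a-1) * y a * rE n (a-1)) * eE n a b :=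
    conj_mid (dE_far (by omega)) (eE_far (by omega))
  have h2 : rE n (a-1) * y a * rE n (a-1) = rE n a * y (a-1) * rE n a := by
    have := Hbr (a-1) (by omega)
    have e1 : a - 1 + 1 = a := by omega
    rw [e1] at this
    exact this
  have hd : dE n (a-1) b = dE n a b * rE n a := by
    have := dE_bot (n := n) (a := a - 1) (b := b) (by omega)
    have e1 : a - 1 + 1 = a := by omega
    rw [e1] at this
    exact this
  have he : eE n (a-1) b = rE n a * eE n a b := by
    have := eE_bot (n := n) (a := a - 1) (b := b) (by omega)
    have e1 : a - 1 + 1 = a := by omega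
    rw [e1] at this
    exact this
  rw [h1, h2, TT, hd, he]
  simp only [mul_assoc]

include Hbr in
theorem SMvi {a b : ℕ} (hab : a + 2 ≤ b) (hb : b ≤ n - 1) :
    rE n a * TT n y a b * rE n a = TT n y (a+1) b := by
  have hd : dE n a b = dE n (a+1) b * rE n (a+1) := dE_bot hab
  have he : eE n a b = rE n (a+1) * eE n (a+1) b := eE_bot hab
  have h1 : rE n a * TT n y a b * rE n a
      = dE n (a+1) b * (rE n a * (rE n (a+1) * y a * rE n (a+1)) * rE n a) *
        eE n (a+1) b := by
    rw [TT, hd, he]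
    have := conj_mid (x := rE n a) (p := dE n (a+1) b) (q := eE n (a+1) b)
      (y := rE n (a+1) * y a * rE n (a+1)) (dE_far (by omega)) (eE_far (by omega))
    calc rE n a * (dE n (a+1) b * rE n (a+1) * y a * (rE n (a+1) * eE n (a+1) b)) * rE n a
        = rE n a * (dE n (a+1) b * (rE n (a+1) * y a * rE n (a+1)) * eE n (a+1) b)
          * rE n a := by simp only [mul_assoc]
      _ = _ := this
  rw [h1, ← Hbr a (by omega)]
  calc dE n (a+1) b * (rE n a * (rE n a * y (a+1) * rE n a) * rE n a) * eE n (a+1) b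
      = dE n (a+1) b * ((rE n a * rE n a) * y (a+1) * (rE n a * rE n a)) * eE n (a+1) b := by
        simp only [mul_assoc]
    _ = TT n y (a+1) b := by rw [rr1, one_mul, mul_one, TT]

theorem SMvii {a : ℕ} :
    rE n a * TT n y a (a+1) * rE n a = rE n a * y a * rE n a := by
  rw [TT, dE_triv (by omega), eE_triv (by omega), one_mul, mul_one]

end SM
end SingTVB
namespace SingTVB
variable {n : ℕ}

theorem swN_self {m j : ℕ} (h1 : j ≠ m) (h2 : j ≠ m + 1) : swN m j = j := by
  rw [swN, if_neg h1, if_neg h2]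

theorem swN_left (m : ℕ) : swN m m = m + 1 := by rw [swN, if_pos rfl]

theorem swN_right (m : ℕ) : swN m (m+1) = m := by
  rw [swN, if_neg (by omega), if_pos rfl]

theorem TT_adj (y : ℕ → STVB n) (a : ℕ) : TT n y a (a+1) = y a := by
  rw [TT, dE_triv (by omega), eE_triv (by omega), one_mul, mul_one]

noncomputable def famL (n : ℕ) (y : ℕ → STVB n) (k l : ℕ) : STVB n :=
  if k < l then TT n y k l else TT n (fun c => rE n c * y c * rE n c) l k

theorem famL_swap (y : ℕ → STVB n) {k l : ℕ} (hkl : k ≠ l) :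
    famL n (fun c => rE n c * y c * rE n c) k l = famL n y l k := by
  have hy : (fun c => rE n c * (rE n c * y c * rE n c) * rE n c) = y := by
    funext c
    calc rE n c * (rE n c * y c * rE n c) * rE n c
        = (rE n c * rE n c) * y c * (rE n c * rE n c) := by simp only [mul_assoc]
      _ = y c := by rw [rr1, one_mul, mul_one]
  rcases lt_or_gt_of_ne hkl with h | h
  · rw [famL, if_pos h, famL, if_neg (by omega), TT]
  · rw [famL, if_neg (by omega), famL, if_pos (by omega), hy, TT]

section Master
variable (y : ℕ → STVB n)
variable (Hfar : ∀ a m : ℕ, m + 2 ≤ a ∨ a + 2 ≤ m → rE n m * y a = y a * rE n m)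
variable (Hbr : ∀ a : ℕ, a + 2 ≤ n - 1 →
  rE n a * y (a+1) * rE n a = rE n (a+1) * y a * rE n (a+1))

include Hfar in
theorem Hfar' : ∀ a m : ℕ, m + 2 ≤ a ∨ a + 2 ≤ m →
    rE n m * (rE n a * y a * rE n a) = (rE n a * y a * rE n a) * rE n m := by
  intro a m h
  have h1 : rE n m * rE n a = rE n a * rE n m := rr_far' (by omega)
  have h2 := Hfar a m h
  calc rE n m * (rE n a * y a * rE n a)
      = (rE n m * rE n a) * y a * rE n a := by simp only [mul_assoc]
    _ = rE n a * (rE n m * y a) * rE n a := by rw [h1]; simp only [mul_assoc]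
    _ = rE n a * (y a * (rE n m * rE n a)) := by rw [h2]; simp only [mul_assoc]
    _ = rE n a * (y a * (rE n a * rE n m)) := by rw [h1]
    _ = (rE n a * y a * rE n a) * rE n m := by simp only [mul_assoc]

include Hbr in
theorem Hbr' : ∀ a : ℕ, a + 2 ≤ n - 1 →
    rE n a * (rE n (a+1) * y (a+1) * rE n (a+1)) * rE n a
      = rE n (a+1) * (rE n a * y a * rE n a) * rE n (a+1) := by
  intro a h
  have hb := braidE (n := n) h
  have key : y (a+1) = rE n a * rE n (a+1) * y a * rE n (a+1) * rE n a := by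
    have h1 := Hbr a h
    calc y (a+1) = (rE n a * rE n a) * y (a+1) * (rE n a * rE n a) := by
          rw [rr1, one_mul, mul_one]
      _ = rE n a * (rE n a * y (a+1) * rE n a) * rE n a := by simp only [mul_assoc]
      _ = rE n a * (rE n (a+1) * y a * rE n (a+1)) * rE n a := by rw [h1]
      _ = _ := by simp only [mul_assoc]
  rw [key]
  calc rE n a * (rE n (a+1) * (rE n a * rE n (a+1) * y a * rE n (a+1) * rE n a) *
        rE n (a+1)) * rE n a
      = (rE n a * rE n (a+1) * rE n a) * (rE n (a+1) * y a * rE n (a+1)) *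
        (rE n a * rE n (a+1) * rE n a) := by simp only [mul_assoc]
    _ = (rE n (a+1) * rE n a * rE n (a+1)) * (rE n (a+1) * y a * rE n (a+1)) *
        (rE n (a+1) * rE n a * rE n (a+1)) := by rw [hb]
    _ = rE n (a+1) * (rE n a * ((rE n (a+1) * rE n (a+1)) * y a *
        (rE n (a+1) * rE n (a+1))) * rE n a) * rE n (a+1) := by simp only [mul_assoc]
    _ = rE n (a+1) * (rE n a * y a * rE n a) * rE n (a+1) := by
        rw [rr1, one_mul, mul_one]

include Hfar Hbr in
theorem master_lt {k l m : ℕ} (hkl : k < l) (hl : l < n) (hm : m + 2 ≤ n) :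
    rE n m * TT n y k l * rE n m = famL n y (swN m k) (swN m l) := by
  have hln : l ≤ n - 1 := by omega
  rcases Nat.lt_or_ge (m+1) k with h1 | h1
  · -- m + 1 < k : far below
    rw [SM0 y Hfar hkl (Or.inl h1), swN_self (by omega) (by omega),
      swN_self (by omega) (by omega), famL, if_pos hkl]
  rcases Nat.lt_or_ge l m with h0 | h0
  · -- l < m : far above
    rw [SM0 y Hfar hkl (Or.inr h0), swN_self (by omega) (by omega),
      swN_self (by omega) (by omega), famL, if_pos hkl]
  rcases Nat.eq_or_lt_of_le h1 with h2 | h2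
  · -- m + 1 = k
    have hk1 : 1 ≤ k := by omega
    have hsm := SMv y Hbr hk1 hkl hln
    have e1 : k - 1 = m := by omega
    rw [e1] at hsm
    have e2 : swN m k = m := by rw [h2, swN_right]
    have e3 : swN m l = l := swN_self (by omega) (by omega)
    rw [hsm, e2, e3, famL, if_pos (by omega)]
  -- now k ≤ m ≤ l
  rcases Nat.eq_or_lt_of_le (Nat.le_of_lt_succ h2) with h3 | h3
  · -- m = k
    subst h3
    rcases Nat.eq_or_lt_of_le hkl with h4 | h4
    · -- l = m + 1 : the flip
      subst h4
      rw [SMvii, swN_left, swN_right, famL, if_neg (by omega), TT_adj]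
    · -- l ≥ m + 2
      rw [SMvi y Hbr (by omega) hln, swN_left, swN_self (by omega) (by omega),
        famL, if_pos (by omega)]
  -- now k + 1 ≤ m ≤ l
  rcases Nat.eq_or_lt_of_le h0 with h5 | h5
  · -- m = l
    subst h5
    have e3 : swN m k = k := swN_self (by omega) (by omega)
    rw [SMiv y hkl, swN_left, e3, famL, if_pos (by omega)]
  rcases Nat.eq_or_lt_of_le (Nat.succ_le_of_lt h5) with h6 | h6
  · -- m + 1 = l
    have hsm := SMiii y (a := k) (b := l) (by omega)
    have e1 : l - 1 = m := by omega
    rw [e1] at hsm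
    have e2 : swN m l = m := by rw [← h6, swN_right]
    have e3 : swN m k = k := swN_self (by omega) (by omega)
    rw [hsm, e2, e3, famL, if_pos (by omega)]
  · -- interior
    rw [SMint y Hfar hln (by omega) (by omega), swN_self (by omega) (by omega),
      swN_self (by omega) (by omega), famL, if_pos hkl]

include Hfar Hbr in
theorem master {k l m : ℕ} (hk : k < n) (hl : l < n) (hkl : k ≠ l) (hm : m + 2 ≤ n) :
    rE n m * famL n y k l * rE n m = famL n y (swN m k) (swN m l) := by
  rcases lt_or_gt_of_ne hkl with h | h
  · rw [famL, if_pos h, master_lt y Hfar Hbr h hl hm]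
  · rw [famL, if_neg (by omega),
      master_lt (fun c => rE n c * y c * rE n c) (Hfar' y Hfar) (Hbr' y Hbr) h hk hm,
      famL_swap]
    have h1 : swN m l ≠ swN m k := by
      intro hc
      rw [swN, swN] at hc
      split_ifs at hc <;> omega
    exact h1
end Master
end SingTVB
namespace SingTVB
variable {n : ℕ}

noncomputable def yLam (n : ℕ) : ℕ → STVB n := fun c => rE n c * sbE n c
noncomputable def yLamBar (n : ℕ) : ℕ → STVB n := fun c => sE n c * rE n c
noncomputable def yZ (n : ℕ) : ℕ → STVB n := fun c => tE n c

theorem yLam_far : ∀ a m : ℕ, m + 2 ≤ a ∨ a + 2 ≤ m →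
    rE n m * yLam n a = yLam n a * rE n m := by
  intro a m h
  rw [yLam, ← mul_assoc, rr_far' (by omega), mul_assoc, ← sbr_far (by omega),
    ← mul_assoc]

theorem yLamBar_far : ∀ a m : ℕ, m + 2 ≤ a ∨ a + 2 ≤ m →
    rE n m * yLamBar n a = yLamBar n a * rE n m := by
  intro a m h
  rw [yLamBar, ← mul_assoc, ← sr_far (by omega), mul_assoc, rr_far' (by omega),
    ← mul_assoc]

theorem yZ_far : ∀ a m : ℕ, m + 2 ≤ a ∨ a + 2 ≤ m →
    rE n m * yZ n a = yZ n a * rE n m := by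
  intro a m h
  rw [yZ, ← tr_far (by omega)]

theorem yLam_br : ∀ a : ℕ, a + 2 ≤ n - 1 →
    rE n a * yLam n (a+1) * rE n a = rE n (a+1) * yLam n a * rE n (a+1) := by
  intro a h
  rw [yLam, yLam]
  calc rE n a * (rE n (a+1) * sbE n (a+1)) * rE n a
      = rE n a * (rE n (a+1) * ((rE n a * rE n a) * sbE n (a+1))) * rE n a := by
        rw [rr1, one_mul]
    _ = (rE n a * rE n (a+1) * rE n a) * (rE n a * sbE n (a+1) * rE n a) := by
        simp only [mul_assoc]
    _ = (rE n (a+1) * rE n a * rE n (a+1)) * (rE n (a+1) * sbE n a * rE n (a+1)) := by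
        rw [braidE h, rsbrE h]
    _ = rE n (a+1) * (rE n a * ((rE n (a+1) * rE n (a+1)) * sbE n a)) * rE n (a+1) := by
        simp only [mul_assoc]
    _ = rE n (a+1) * (rE n a * sbE n a) * rE n (a+1) := by
        rw [rr1, one_mul]

theorem yLamBar_br : ∀ a : ℕ, a + 2 ≤ n - 1 →
    rE n a * yLamBar n (a+1) * rE n a = rE n (a+1) * yLamBar n a * rE n (a+1) := by
  intro a h
  rw [yLamBar, yLamBar]
  calc rE n a * (sE n (a+1) * rE n (a+1)) * rE n a
      = rE n a * (sE n (a+1) * ((rE n a * rE n a) * rE n (a+1))) * rE n a := by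
        rw [rr1, one_mul]
    _ = (rE n a * sE n (a+1) * rE n a) * (rE n a * rE n (a+1) * rE n a) := by
        simp only [mul_assoc]
    _ = (rE n (a+1) * sE n a * rE n (a+1)) * (rE n (a+1) * rE n a * rE n (a+1)) := by
        rw [rsrE h, braidE h]
    _ = rE n (a+1) * (sE n a * ((rE n (a+1) * rE n (a+1)) * rE n a)) * rE n (a+1) := by
        simp only [mul_assoc]
    _ = rE n (a+1) * (sE n a * rE n a) * rE n (a+1) := by
        rw [rr1, one_mul]

theorem yZ_br : ∀ a : ℕ, a + 2 ≤ n - 1 →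
    rE n a * yZ n (a+1) * rE n a = rE n (a+1) * yZ n a * rE n (a+1) :=
  fun a h => rtrE h

theorem lam_famL (k l : Fin n) : lam n k l = famL n (yLam n) k.val l.val := by
  rw [lam, lamW, famL]
  by_cases h : (k : ℕ) < (l : ℕ)
  · rw [if_pos h, if_pos h, TT]
    simp only [map_mul]
    rfl
  · rw [if_neg h, if_neg h, TT]
    simp only [map_mul]
    rfl

theorem lamBar_famL (k l : Fin n) : lamBar n k l = famL n (yLamBar n) k.val l.val := by
  rw [lamBar, lamBarW, famL]
  by_cases h : (k : ℕ) < (l : ℕ)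
  · rw [if_pos h, if_pos h, TT]
    simp only [map_mul]
    rfl
  · rw [if_neg h, if_neg h, TT]
    simp only [map_mul]
    rfl

theorem zel_famL (k l : Fin n) : zel n k l = famL n (yZ n) k.val l.val := by
  rw [zel, zW, famL]
  by_cases h : (k : ℕ) < (l : ℕ)
  · rw [if_pos h, if_pos h, TT]
    simp only [map_mul]
    rfl
  · rw [if_neg h, if_neg h, TT]
    simp only [map_mul]
    rfl

/-- The generating set. -/
def Sgen (n : ℕ) : Set (STVB n) :=
  {x : STVB n | ∃ k l : Fin n, k ≠ l ∧ (x = lam n k l ∨ x = lamBar n k l ∨ x = zel n k l)}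
    ∪ Set.range (gamE n)

theorem gamE_eq_gE (j : Fin n) : gamE n j = gE n j.val := by
  rw [gamE, gE, dif_pos j.isLt]

theorem K_conj {m : ℕ} (hm : m + 2 ≤ n) :
    ∀ x ∈ Submonoid.closure (Sgen n), rE n m * x * rE n m ∈ Submonoid.closure (Sgen n) := by
  intro x hx
  induction hx using Submonoid.closure_induction with
  | one =>
    rw [mul_one, rr1]
    exact Submonoid.one_mem _
  | mul a b ha hb iha ihb =>
    have : rE n m * (a * b) * rE n m = (rE n m * a * rE n m) * (rE n m * b * rE n m) := by
      calc rE n m * (a * b) * rE n m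
          = rE n m * (a * ((rE n m * rE n m) * b)) * rE n m := by rw [rr1, one_mul]
        _ = (rE n m * a * rE n m) * (rE n m * b * rE n m) := by simp only [mul_assoc]
    rw [this]
    exact Submonoid.mul_mem _ iha ihb
  | mem a ha =>
    have hswlt : ∀ j : Fin n, swN m j.val < n := by
      intro j
      rw [swN]
      split_ifs <;> omega
    have hswne : ∀ k l : Fin n, k ≠ l → swN m k.val ≠ swN m l.val := by
      intro k l hkl hc
      rw [swN, swN] at hc
      apply hkl
      apply Fin.ext
      split_ifs at hc <;> omega
    rcases ha with ⟨k, l, hkl, hx⟩ | ⟨j, rfl⟩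
    · have hkv : (k : ℕ) ≠ (l : ℕ) := fun hc => hkl (Fin.ext hc)
      rcases hx with rfl | rfl | rfl
      · rw [lam_famL, master (yLam n) yLam_far yLam_br k.isLt l.isLt hkv hm,
          ← lam_famL ⟨swN m k.val, hswlt k⟩ ⟨swN m l.val, hswlt l⟩]
        exact Submonoid.subset_closure (Or.inl ⟨_, _, fun hc => hswne k l hkl
          (congrArg Fin.val hc), Or.inl rfl⟩)
      · rw [lamBar_famL, master (yLamBar n) yLamBar_far yLamBar_br k.isLt l.isLt hkv hm,
          ← lamBar_famL ⟨swN m k.val, hswlt k⟩ ⟨swN m l.val, hswlt l⟩]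
        exact Submonoid.subset_closure (Or.inl ⟨_, _, fun hc => hswne k l hkl
          (congrArg Fin.val hc), Or.inr (Or.inl rfl)⟩)
      · rw [zel_famL, master (yZ n) yZ_far yZ_br k.isLt l.isLt hkv hm,
          ← zel_famL ⟨swN m k.val, hswlt k⟩ ⟨swN m l.val, hswlt l⟩]
        exact Submonoid.subset_closure (Or.inl ⟨_, _, fun hc => hswne k l hkl
          (congrArg Fin.val hc), Or.inr (Or.inr rfl)⟩)
    · rw [gamE_eq_gE, rgr_conj (by omega)]
      have : gE n (swN m j.val) = gamE n ⟨swN m j.val, hswlt j⟩ := by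
        rw [gamE_eq_gE]
      rw [this]
      exact Submonoid.subset_closure (Or.inr ⟨_, rfl⟩)

end SingTVB
namespace SingTVB
variable {n : ℕ}

/-- the descending run word `ρ_{k-1} ⋯ ρ_m`. -/
def run (n m k : ℕ) : FM n := ((List.range' m (k - m)).reverse.map (WrN n)).prod

noncomputable def runE (n m k : ℕ) : STVB n := mkS n (run n m k)

theorem run_triv {m k : ℕ} (h : k ≤ m) : run n m k = 1 := by
  unfold run
  have : k - m = 0 := by omega
  rw [this]; rfl

theorem runE_triv {m k : ℕ} (h : k ≤ m) : runE n m k = 1 := by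
  rw [runE, run_triv h]; exact map_one _

theorem run_top {m k : ℕ} (h : m ≤ k) : run n m (k+1) = WrN n k * run n m k := by
  unfold run
  have h1 : k + 1 - m = (k - m) + 1 := by omega
  rw [h1, List.range'_concat]
  have h2 : m + 1 * (k - m) = k := by omega
  rw [h2, List.reverse_append, List.reverse_singleton, List.singleton_append,
    List.map_cons, List.prod_cons]

theorem run_bot {m k : ℕ} (h : m + 1 ≤ k) : run n m k = run n (m+1) k * WrN n m := by
  unfold run
  have h1 : k - m = (k - (m+1)) + 1 := by omega
  rw [h1, List.range'_succ, List.reverse_cons, List.map_append, List.prod_append,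
    List.map_singleton, List.prod_singleton]

theorem runE_top {m k : ℕ} (h : m ≤ k) : runE n m (k+1) = rE n k * runE n m k := by
  rw [runE, run_top h, map_mul]; rfl

theorem runE_bot {m k : ℕ} (h : m + 1 ≤ k) : runE n m k = runE n (m+1) k * rE n m := by
  rw [runE, run_bot h, map_mul]; rfl

theorem runE_far {m k j : ℕ} (h : j + 2 ≤ m ∨ k + 1 ≤ j) :
    rE n j * runE n m k = runE n m k * rE n j := by
  induction k with
  | zero => rw [runE_triv (by omega)]; simp
  | succ c ih =>
    by_cases hc : m ≤ c
    · rw [runE_top hc, ← mul_assoc, rr_far' (by omega), mul_assoc, ih (by omega),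
        ← mul_assoc]
    · rw [runE_triv (by omega)]; simp

theorem runE_shuf {m j : ℕ} (hmj : m ≤ j) :
    ∀ k, j + 2 ≤ k → k ≤ n - 1 → rE n j * runE n m k = runE n m k * rE n (j+1) := by
  intro k
  induction k with
  | zero => omega
  | succ c ih =>
    intro hb hbn
    rcases eq_or_lt_of_le hb with heq | hlt
    · have hc : c = j + 1 := by omega
      subst hc
      rw [runE_top (by omega), runE_top (by omega), ← mul_assoc, ← mul_assoc,
        braidE (by omega)]
      rw [mul_assoc (rE n (j+1) * rE n j), runE_far (n := n) (m := m) (k := j) (j := j+1)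
        (by omega), ← mul_assoc, mul_assoc]
      simp only [mul_assoc]
    · have hc : j + 2 ≤ c := by omega
      rw [runE_top (by omega), ← mul_assoc, rr_far' (by omega), mul_assoc,
        ih hc (by omega), ← mul_assoc]

/-- words consisting only of ρ-letters -/
def IsRho {n : ℕ} (w : FM n) : Prop := ∀ x ∈ FreeMonoid.toList w, ∃ i, x = Gen.rho i

theorem isRho_one : IsRho (1 : FM n) := by
  intro x hx
  cases hx

theorem isRho_mul {u v : FM n} (hu : IsRho u) (hv : IsRho v) : IsRho (u * v) := by
  intro x hx
  rcases List.mem_append.mp hx with h | h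
  · exact hu x h
  · exact hv x h

theorem isRho_WrN (i : ℕ) : IsRho (WrN n i) := by
  intro x hx
  rw [WrN] at hx
  split_ifs at hx
  · simp only [Wr, FreeMonoid.toList_of, List.mem_singleton] at hx
    exact ⟨_, hx⟩
  · simp only [FreeMonoid.toList_one, List.not_mem_nil] at hx

theorem isRho_run (m k : ℕ) : IsRho (run n m k) := by
  unfold run
  generalize (List.range' m (k - m)).reverse = L
  induction L with
  | nil => exact isRho_one
  | cons a L ih =>
    rw [List.map_cons, List.prod_cons]
    exact isRho_mul (isRho_WrN a) ih

/-- a ρ-word can be moved past elements of the closure. -/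
theorem rho_word_comm {u : FM n} (hu : IsRho u) :
    ∀ x ∈ Submonoid.closure (Sgen n), ∃ y ∈ Submonoid.closure (Sgen n),
      mkS n u * x = y * mkS n u := by
  induction u using FreeMonoid.recOn with
  | one =>
    intro x hx
    exact ⟨x, hx, by simp⟩
  | of_mul g w ih =>
    intro x hx
    have hg : ∃ i, g = Gen.rho i := hu g (by
      rw [FreeMonoid.toList_of_mul]; exact List.mem_cons_self)
    have hw : IsRho w := fun z hz => hu z (by
      rw [FreeMonoid.toList_of_mul]; exact List.mem_cons_of_mem _ hz)
    obtain ⟨y, hy, hxy⟩ := ih hw x hx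
    rcases hg with ⟨i, rfl⟩
    have hri : mkS n (FreeMonoid.of (Gen.rho i)) = rE n i.val := by
      rw [rE_def i.val i.isLt]
      rfl
    have hy2 : rE n i.val * y * rE n i.val ∈ Submonoid.closure (Sgen n) :=
      K_conj (by have := i.isLt; omega) y hy
    refine ⟨rE n i.val * y * rE n i.val, hy2, ?_⟩
    rw [map_mul, hri]
    calc rE n i.val * mkS n w * x = rE n i.val * (y * mkS n w) := by
          rw [mul_assoc, hxy]
      _ = (rE n i.val * y * (rE n i.val * rE n i.val)) * mkS n w := by
          rw [rr1, mul_one]; simp only [mul_assoc]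
      _ = rE n i.val * y * rE n i.val * (rE n i.val * mkS n w) := by
          simp only [mul_assoc]

end SingTVB
namespace SingTVB
variable {n : ℕ}

/-- adjacent transposition on `Fin n`, ℕ-indexed, junk `1` out of range. -/
def swn (n i : ℕ) : Equiv.Perm (Fin n) :=
  if h : i < n - 1 then Equiv.swap ⟨i, by omega⟩ ⟨i+1, by omega⟩ else 1

theorem swn_inv (i : ℕ) : (swn n i)⁻¹ = swn n i := by
  rw [swn]
  split_ifs
  · exact Equiv.swap_inv _ _
  · rfl

theorem swn_mul_self (i : ℕ) : swn n i * swn n i = 1 := by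
  rw [swn]
  split_ifs
  · exact Equiv.swap_mul_self _ _
  · rw [one_mul]

theorem swn_val {i : ℕ} (h : i < n - 1) (x : Fin n) : ((swn n i) x).val = swN i x.val := by
  rw [swn, dif_pos h, Equiv.swap_apply_def, swN]
  split_ifs with h1 h2 h3 h4 h5 h6 <;>
    first
      | rfl
      | (simp only [Fin.ext_iff] at * <;> omega)

theorem swn_fix {i : ℕ} (x : Fin n) (h1 : x.val ≠ i) (h2 : x.val ≠ i + 1) :
    (swn n i) x = x := by
  by_cases h : i < n - 1
  · apply Fin.ext
    rw [swn_val h, swN_self h1 h2]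
  · rw [swn, dif_neg h]
    rfl

section PermSide
variable (φ : STVB n →* Equiv.Perm (Fin n))

/-- the permutation of a word. -/
noncomputable def Pw : FM n →* Equiv.Perm (Fin n) := φ.comp (mkS n)

variable (hrφ : ∀ i : Fin (n - 1), φ (rhoE n i) = swp i)

include hrφ in
theorem Pw_WrN (i : ℕ) : Pw φ (WrN n i) = swn n i := by
  rw [WrN, swn]
  split_ifs with h
  · have := hrφ ⟨i, h⟩
    rw [rhoE] at this
    rw [Pw, MonoidHom.comp_apply, this, swp]
    rfl
  · exact map_one _

/-- value table for the cycle permutation of a run. -/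
def cval (m k j : ℕ) : ℕ := if j = m then k else if m < j ∧ j ≤ k then j - 1 else j

include hrφ in
theorem Pw_run_val {m k : ℕ} (hmk : m ≤ k) (hk : k ≤ n - 1) (x : Fin n) :
    ((Pw φ (run n m k)) x).val = cval m k x.val := by
  induction k, hmk using Nat.le_induction with
  | base =>
    rw [run_triv (le_refl m), map_one]
    simp only [Equiv.Perm.one_apply]
    rw [cval]
    split_ifs with h1 h2 <;> omega
  | succ k hmk ih =>
    rw [run_top hmk, map_mul]
    have hkn : k < n - 1 := by omega
    have : ((Pw φ (WrN n k) * Pw φ (run n m k)) x).val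
        = swN k ((Pw φ (run n m k) x).val) := by
      rw [Equiv.Perm.mul_apply, Pw_WrN φ hrφ, swn_val hkn]
    rw [this, ih (by omega)]
    rw [cval, cval, swN]
    split_ifs <;> omega

include hrφ in
theorem Pw_run_fix {m k : ℕ} (hmk : m ≤ k) (hk : k ≤ n - 1) (x : Fin n)
    (hx : k < x.val) : (Pw φ (run n m k)) x = x := by
  apply Fin.ext
  rw [Pw_run_val φ hrφ hmk hk, cval]
  split_ifs <;> omega

include hrφ in
theorem Pw_run_bottom {m k : ℕ} (hmk : m ≤ k) (hk : k ≤ n - 1) (hm : m < n) :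
    (Pw φ (run n m k)) ⟨m, hm⟩ = ⟨k, by omega⟩ := by
  apply Fin.ext
  rw [Pw_run_val φ hrφ hmk hk, cval]
  simp

end PermSide
end SingTVB
namespace SingTVB
variable {n : ℕ}

section Rep
variable (φ : STVB n →* Equiv.Perm (Fin n))

/-- canonical representative word (in ρ's) for a permutation, built stage by stage. -/
noncomputable def repW : ℕ → Equiv.Perm (Fin n) → FM n
  | 0, _ => 1
  | (k+1), p =>
    if h : k < n then
      repW k (p * (Pw φ (run n ((p⁻¹ ⟨k, h⟩).val) k))⁻¹) * run n ((p⁻¹ ⟨k, h⟩).val) k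
    else repW k p

/-- `p` fixes all indices `≥ k`. -/
def Fix (k : ℕ) (p : Equiv.Perm (Fin n)) : Prop := ∀ x : Fin n, k ≤ x.val → p x = x

theorem perm_apply_inv_self' {α : Type*} (p : Equiv.Perm α) (x : α) : p (p⁻¹ x) = x := by simp

theorem perm_inv_apply_self' {α : Type*} (p : Equiv.Perm α) (x : α) : p⁻¹ (p x) = x := by simp

theorem m_le {k : ℕ} (hk : k < n) {p : Equiv.Perm (Fin n)} (hp : Fix (k+1) p) :
    (p⁻¹ ⟨k, hk⟩).val ≤ k := by
  by_contra h
  push_neg at h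
  have h2 := hp (p⁻¹ ⟨k, hk⟩) (by omega)
  rw [perm_apply_inv_self'] at h2
  have := congrArg Fin.val h2
  simp only at this
  omega

variable (hrφ : ∀ i : Fin (n - 1), φ (rhoE n i) = swp i)

include hrφ in
theorem fix_step {k : ℕ} (hk : k < n) {p : Equiv.Perm (Fin n)} (hp : Fix (k+1) p) :
    Fix k (p * (Pw φ (run n ((p⁻¹ ⟨k, hk⟩).val) k))⁻¹) := by
  intro x hx
  have hm : (p⁻¹ ⟨k, hk⟩).val ≤ k := m_le hk hp
  have hkn1 : k ≤ n - 1 := by omega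
  rcases eq_or_lt_of_le hx with h1 | h1
  · have hxk : x = ⟨k, hk⟩ := Fin.ext h1.symm
    have hc : (Pw φ (run n ((p⁻¹ ⟨k, hk⟩).val) k)) ⟨(p⁻¹ ⟨k, hk⟩).val, by omega⟩
        = ⟨k, hk⟩ := Pw_run_bottom φ hrφ hm hkn1 (by omega)
    have hcinv := congrArg (⇑(Pw φ (run n ((p⁻¹ ⟨k, hk⟩).val) k))⁻¹) hc
    rw [perm_inv_apply_self'] at hcinv
    rw [Equiv.Perm.mul_apply, hxk, ← hcinv]
    have h3 : (⟨(p⁻¹ ⟨k, hk⟩).val, by omega⟩ : Fin n) = p⁻¹ ⟨k, hk⟩ := Fin.ext rfl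
    rw [h3, perm_apply_inv_self']
  · have hfix : (Pw φ (run n ((p⁻¹ ⟨k, hk⟩).val) k)) x = x :=
      Pw_run_fix φ hrφ hm hkn1 x h1
    rw [Equiv.Perm.mul_apply, ← hfix, perm_inv_apply_self', hfix]
    exact hp x (by omega)

include hrφ in
theorem Pw_repW : ∀ k, k ≤ n → ∀ p : Equiv.Perm (Fin n), Fix k p →
    Pw φ (repW φ k p) = p := by
  intro k
  induction k with
  | zero =>
    intro _ p hp
    simp only [repW, map_one]
    exact (Equiv.ext fun x => (hp x (by omega))).symm
  | succ k ih =>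
    intro hk p hp
    have hkn : k < n := by omega
    simp only [repW, dif_pos hkn]
    rw [map_mul, ih (by omega) _ (fix_step φ hrφ hkn hp), inv_mul_cancel_right]

include hrφ in
theorem isRho_repW : ∀ k, ∀ p : Equiv.Perm (Fin n), IsRho (repW φ k p) := by
  intro k
  induction k with
  | zero => intro p; exact isRho_one
  | succ k ih =>
    intro p
    by_cases h : k < n
    · simp only [repW, dif_pos h]
      exact isRho_mul (ih _) (isRho_run _ _)
    · simp only [repW, dif_neg h]
      exact ih _

include hrφ in
theorem repW_one : ∀ k, k ≤ n → repW (n := n) φ k 1 = 1 := by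
  intro k
  induction k with
  | zero => intro _; rfl
  | succ k ih =>
    intro hk
    have hkn : k < n := by omega
    simp only [repW, dif_pos hkn]
    have h1 : ((1 : Equiv.Perm (Fin n))⁻¹ (⟨k, hkn⟩ : Fin n)).val = k := rfl
    rw [h1, run_triv (le_refl k), map_one, inv_one, mul_one, mul_one]
    exact ih (by omega)

end Rep
end SingTVB
namespace SingTVB
variable {n : ℕ}

section RepMul
variable (φ : STVB n →* Equiv.Perm (Fin n))
variable (hrφ : ∀ i : Fin (n - 1), φ (rhoE n i) = swp i)

include hrφ in
theorem repW_mul : ∀ k, k ≤ n → ∀ p : Equiv.Perm (Fin n), Fix k p → ∀ i : ℕ, i + 2 ≤ k →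
    mkS n (repW φ k p) * rE n i = mkS n (repW φ k (p * swn n i)) := by
  intro k
  induction k with
  | zero => intro _ _ _ i hi; omega
  | succ k ih =>
    intro hk p hp i hi
    have hkn : k < n := by omega
    have hkn1 : k ≤ n - 1 := by omega
    have hin : i < n - 1 := by omega
    have hik : i + 1 ≤ k := by omega
    have hm : (p⁻¹ ⟨k, hkn⟩).val ≤ k := m_le hkn hp
    set m := (p⁻¹ ⟨k, hkn⟩).val with hmdef
    have hq : Fix (k+1) (p * swn n i) := by
      intro x hx
      rw [Equiv.Perm.mul_apply, swn_fix x (by omega) (by omega), hp x hx]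
    have hm' : ((p * swn n i)⁻¹ ⟨k, hkn⟩).val = swN i m := by
      rw [mul_inv_rev, swn_inv, Equiv.Perm.mul_apply, swn_val hin]
    simp only [repW, dif_pos hkn]
    rw [← hmdef, hm']
    rw [map_mul, map_mul]
    by_cases hmi : m = i
    · -- flip-up case
      have e1 : swN i m = i + 1 := by rw [hmi, swN_left]
      rw [e1]
      have hw : run n i k = run n (i+1) k * WrN n i := run_bot (by omega)
      have hc : Pw φ (run n i k) = Pw φ (run n (i+1) k) * swn n i := by
        rw [hw, map_mul, Pw_WrN φ hrφ]
      have hpq : p * (Pw φ (run n m k))⁻¹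
          = (p * swn n i) * (Pw φ (run n (i+1) k))⁻¹ := by
        rw [hmi, hc, mul_inv_rev, swn_inv, ← mul_assoc]
      rw [hpq, hmi, hw, map_mul]
      have hWr : (mkS n (WrN n i) : STVB n) = rE n i := rfl
      rw [hWr]
      simp only [mul_assoc]
      rw [rr1, mul_one]
    by_cases hmi1 : m = i + 1
    · -- flip-down case
      have e1 : swN i m = i := by rw [hmi1, swN_right]
      rw [e1]
      have hw : run n i k = run n (i+1) k * WrN n i := run_bot (by omega)
      have hc : Pw φ (run n i k) = Pw φ (run n (i+1) k) * swn n i := by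
        rw [hw, map_mul, Pw_WrN φ hrφ]
      have hpq : (p * swn n i) * (Pw φ (run n i k))⁻¹
          = p * (Pw φ (run n m k))⁻¹ := by
        rw [hmi1, hc, mul_inv_rev, swn_inv, ← mul_assoc, mul_assoc p, swn_mul_self,
          mul_one]
      rw [hpq, hw, map_mul, hmi1]
      have hWr : (mkS n (WrN n i) : STVB n) = rE n i := rfl
      rw [hWr, ← mul_assoc]
    · -- m ∉ {i, i+1}
      have e1 : swN i m = m := swN_self hmi hmi1
      rw [e1]
      have hfixp : Fix k (p * (Pw φ (run n m k))⁻¹) := fix_step φ hrφ hkn hp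
      by_cases hcase : i + 1 < m
      · -- far below: conjugation gives swn i back
        have conj : Pw φ (run n m k) * swn n i * (Pw φ (run n m k))⁻¹ = swn n i := by
          rw [swn, dif_pos hin, ← Equiv.swap_apply_apply]
          congr 1 <;>
            (apply Fin.ext
             rw [Pw_run_val φ hrφ hm hkn1]
             rw [cval]
             simp only [Fin.val_mk]
             split_ifs <;> omega)
        have hpq : (p * swn n i) * (Pw φ (run n m k))⁻¹
            = (p * (Pw φ (run n m k))⁻¹) * swn n i := by
          calc (p * swn n i) * (Pw φ (run n m k))⁻¹
              = p * (Pw φ (run n m k))⁻¹ *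
                (Pw φ (run n m k) * swn n i * (Pw φ (run n m k))⁻¹) := by group
            _ = (p * (Pw φ (run n m k))⁻¹) * swn n i := by rw [conj]
        rw [hpq, ← ih (by omega) _ hfixp i (by omega)]
        have hrun : (mkS n (run n m k) : STVB n) = runE n m k := rfl
        rw [hrun]
        conv_lhs => rw [mul_assoc, ← runE_far (n := n) (m := m) (k := k) (j := i)
          (by omega), ← mul_assoc]
      · -- m < i
        have hmlt : m < i := by omega
        have e2 : i - 1 + 1 = i := by omega
        have conj : Pw φ (run n m k) * swn n i * (Pw φ (run n m k))⁻¹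
            = swn n (i-1) := by
          rw [swn, dif_pos hin, swn, dif_pos (by omega), ← Equiv.swap_apply_apply]
          congr 1 <;>
            (apply Fin.ext
             rw [Pw_run_val φ hrφ hm hkn1]
             rw [cval]
             simp only [Fin.val_mk]
             split_ifs <;> omega)
        have hpq : (p * swn n i) * (Pw φ (run n m k))⁻¹
            = (p * (Pw φ (run n m k))⁻¹) * swn n (i-1) := by
          calc (p * swn n i) * (Pw φ (run n m k))⁻¹
              = p * (Pw φ (run n m k))⁻¹ *
                (Pw φ (run n m k) * swn n i * (Pw φ (run n m k))⁻¹) := by group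
            _ = (p * (Pw φ (run n m k))⁻¹) * swn n (i-1) := by rw [conj]
        rw [hpq, ← ih (by omega) _ hfixp (i-1) (by omega)]
        have hshuf : rE n (i-1) * runE n m k = runE n m k * rE n i := by
          have := runE_shuf (n := n) (m := m) (j := i-1) (by omega) k (by omega) hkn1
          rw [e2] at this
          exact this
        have hrun : (mkS n (run n m k) : STVB n) = runE n m k := rfl
        rw [hrun]
        conv_lhs => rw [mul_assoc, ← hshuf, ← mul_assoc]

end RepMul
end SingTVB
namespace SingTVB
variable {n : ℕ}

theorem fa_ne_fb (i : Fin (n-1)) : fa i ≠ fb i := by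
  intro h
  have := congrArg Fin.val h
  simp [fa, fb] at this

/-- adjacent generators as elements -/
theorem zel_adj (i : Fin (n-1)) : zel n (fa i) (fb i) = tE n i.val := by
  rw [zel, zW]
  have hlt : (fa i).val < (fb i).val := by simp [fa, fb]
  rw [if_pos hlt]
  show mkS n (desc n i.val (i.val+1) * WtN n i.val * asc n i.val (i.val+1)) = _
  rw [map_mul, map_mul, desc_triv (by omega), asc_triv (by omega), map_one,
    one_mul, mul_one, tE]

theorem lamBar_adj (i : Fin (n-1)) :
    lamBar n (fa i) (fb i) = sE n i.val * rE n i.val := by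
  rw [lamBar, lamBarW]
  have hlt : (fa i).val < (fb i).val := by simp [fa, fb]
  rw [if_pos hlt]
  show mkS n (desc n i.val (i.val+1) * (WsN n i.val * WrN n i.val) *
    asc n i.val (i.val+1)) = _
  rw [map_mul, map_mul, desc_triv (by omega), asc_triv (by omega), map_one,
    one_mul, mul_one, map_mul, sE, rE]

theorem lam_adj' (i : Fin (n-1)) :
    lam n (fb i) (fa i) = sbE n i.val * rE n i.val := by
  rw [lam, lamW]
  have hlt : ¬ (fb i).val < (fa i).val := by simp [fa, fb]
  rw [if_neg hlt]
  show mkS n (desc n i.val (i.val+1) * (WrN n i.val * (WrN n i.val * WsbN n i.val) *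
    WrN n i.val) * asc n i.val (i.val+1)) = _
  rw [map_mul, map_mul, desc_triv (by omega), asc_triv (by omega), map_one,
    one_mul, mul_one, map_mul, map_mul, map_mul]
  show rE n i.val * (rE n i.val * sbE n i.val) * rE n i.val = _
  rw [← mul_assoc, rr1, one_mul]

theorem zel_adj_mem (i : Fin (n-1)) : tE n i.val ∈ Sgen n := by
  rw [← zel_adj]
  exact Or.inl ⟨fa i, fb i, fa_ne_fb i, Or.inr (Or.inr rfl)⟩

theorem lamBar_adj_mem (i : Fin (n-1)) : sE n i.val * rE n i.val ∈ Sgen n := by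
  rw [← lamBar_adj]
  exact Or.inl ⟨fa i, fb i, fa_ne_fb i, Or.inr (Or.inl rfl)⟩

theorem lam_adj_mem (i : Fin (n-1)) : sbE n i.val * rE n i.val ∈ Sgen n := by
  rw [← lam_adj']
  exact Or.inl ⟨fb i, fa i, (fa_ne_fb i).symm, Or.inl rfl⟩

section Assembly
variable (φ : STVB n →* Equiv.Perm (Fin n))
variable (hs : ∀ i : Fin (n - 1), φ (sigE n i) = swp i)
variable (hsb : ∀ i : Fin (n - 1), φ (sigbE n i) = swp i)
variable (hr : ∀ i : Fin (n - 1), φ (rhoE n i) = swp i)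
variable (ht : ∀ i : Fin (n - 1), φ (tauE n i) = 1)
variable (hg : ∀ j : Fin n, φ (gamE n j) = 1)

theorem swn_eq_swp (i : Fin (n-1)) : swn n i.val = swp i := by
  rw [swn, dif_pos i.isLt]
  rfl

include hr in
theorem Pw_desc_asc : ∀ a b : ℕ, Pw φ (desc n a b) * Pw φ (asc n a b) = 1 := by
  intro a b
  induction b with
  | zero => rw [desc_triv (by omega), asc_triv (by omega), map_one, one_mul]
  | succ c ih =>
    by_cases h : a + 1 ≤ c
    · rw [desc_top h, asc_top h, map_mul, map_mul, Pw_WrN φ hr]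
      calc swn n c * Pw φ (desc n a c) * (Pw φ (asc n a c) * swn n c)
          = swn n c * (Pw φ (desc n a c) * Pw φ (asc n a c)) * swn n c := by
            simp only [mul_assoc]
        _ = 1 := by rw [ih, mul_one, swn_mul_self]
    · rw [desc_triv (by omega), asc_triv (by omega), map_one, one_mul]

include hr hsb in
theorem phi_lam (k l : Fin n) : φ (lam n k l) = 1 := by
  have hsb' : ∀ m : ℕ, Pw φ (WsbN n m) = swn n m := by
    intro m
    rw [WsbN, swn]
    split_ifs with h
    · have := hsb ⟨m, h⟩
      rw [sigbE] at this
      rw [Pw, MonoidHom.comp_apply, this, swp]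
      rfl
    · exact map_one _
  have : φ (lam n k l) = Pw φ (lamW n k l) := rfl
  rw [this, lamW]
  split_ifs with h
  · rw [map_mul, map_mul, map_mul, Pw_WrN φ hr, hsb', swn_mul_self, mul_one]
    exact Pw_desc_asc φ hr _ _
  · rw [map_mul, map_mul, map_mul, map_mul, map_mul, Pw_WrN φ hr, hsb',
      swn_mul_self, mul_one, swn_mul_self, mul_one]
    exact Pw_desc_asc φ hr _ _

include hr hs in
theorem phi_lamBar (k l : Fin n) : φ (lamBar n k l) = 1 := by
  have hs' : ∀ m : ℕ, Pw φ (WsN n m) = swn n m := by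
    intro m
    rw [WsN, swn]
    split_ifs with h
    · have := hs ⟨m, h⟩
      rw [sigE] at this
      rw [Pw, MonoidHom.comp_apply, this, swp]
      rfl
    · exact map_one _
  have : φ (lamBar n k l) = Pw φ (lamBarW n k l) := rfl
  rw [this, lamBarW]
  split_ifs with h
  · rw [map_mul, map_mul, map_mul, Pw_WrN φ hr, hs', swn_mul_self, mul_one]
    exact Pw_desc_asc φ hr _ _
  · rw [map_mul, map_mul, map_mul, map_mul, map_mul, Pw_WrN φ hr, hs',
      swn_mul_self, mul_one, swn_mul_self, mul_one]
    exact Pw_desc_asc φ hr _ _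

include hr ht in
theorem phi_zel (k l : Fin n) : φ (zel n k l) = 1 := by
  have ht' : ∀ m : ℕ, Pw φ (WtN n m) = 1 := by
    intro m
    rw [WtN]
    split_ifs with h
    · exact ht ⟨m, h⟩
    · exact map_one _
  have : φ (zel n k l) = Pw φ (zW n k l) := rfl
  rw [this, zW]
  split_ifs with h
  · rw [map_mul, map_mul, ht', mul_one]
    exact Pw_desc_asc φ hr _ _
  · rw [map_mul, map_mul, map_mul, map_mul, Pw_WrN φ hr, ht',
      mul_one, swn_mul_self, mul_one]
    exact Pw_desc_asc φ hr _ _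

end Assembly
end SingTVB
namespace SingTVB
variable {n : ℕ}

section Final
variable (φ : STVB n →* Equiv.Perm (Fin n))
variable (hs : ∀ i : Fin (n - 1), φ (sigE n i) = swp i)
variable (hsb : ∀ i : Fin (n - 1), φ (sigbE n i) = swp i)
variable (hr : ∀ i : Fin (n - 1), φ (rhoE n i) = swp i)
variable (ht : ∀ i : Fin (n - 1), φ (tauE n i) = 1)
variable (hg : ∀ j : Fin n, φ (gamE n j) = 1)

include hr in
theorem Pw_of_rho (i : Fin (n-1)) : Pw φ (FreeMonoid.of (Gen.rho i)) = swn n i.val := by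
  have h1 : Pw φ (FreeMonoid.of (Gen.rho i)) = φ (rhoE n i) := rfl
  rw [h1, hr, swn_eq_swp]

include hs in
theorem Pw_of_sig (i : Fin (n-1)) : Pw φ (FreeMonoid.of (Gen.sig i)) = swn n i.val := by
  have h1 : Pw φ (FreeMonoid.of (Gen.sig i)) = φ (sigE n i) := rfl
  rw [h1, hs, swn_eq_swp]

include hsb in
theorem Pw_of_sigb (i : Fin (n-1)) : Pw φ (FreeMonoid.of (Gen.sigb i)) = swn n i.val := by
  have h1 : Pw φ (FreeMonoid.of (Gen.sigb i)) = φ (sigbE n i) := rfl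
  rw [h1, hsb, swn_eq_swp]

include ht in
theorem Pw_of_tau (i : Fin (n-1)) : Pw φ (FreeMonoid.of (Gen.tau i)) = 1 := ht i

include hg in
theorem Pw_of_gam (j : Fin n) : Pw φ (FreeMonoid.of (Gen.gam j)) = 1 := hg j

theorem mkS_of_rho (i : Fin (n-1)) : mkS n (FreeMonoid.of (Gen.rho i)) = rE n i.val := by
  rw [rE_def i.val i.isLt]
  rfl

theorem mkS_of_sig (i : Fin (n-1)) : mkS n (FreeMonoid.of (Gen.sig i)) = sE n i.val := by
  rw [sE, WsN, dif_pos i.isLt]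
  rfl

theorem mkS_of_sigb (i : Fin (n-1)) : mkS n (FreeMonoid.of (Gen.sigb i)) = sbE n i.val := by
  rw [sbE, WsbN, dif_pos i.isLt]
  rfl

theorem mkS_of_tau (i : Fin (n-1)) : mkS n (FreeMonoid.of (Gen.tau i)) = tE n i.val := by
  rw [tE, WtN, dif_pos i.isLt]
  rfl

theorem mkS_of_gam (j : Fin n) : mkS n (FreeMonoid.of (Gen.gam j)) = gamE n j := rfl

include hs hsb hr ht hg in
theorem gen_step (p : Equiv.Perm (Fin n)) (g : Gen n) :
    ∃ c ∈ Submonoid.closure (Sgen n),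
      mkS n (repW φ n p) * mkS n (FreeMonoid.of g)
        = c * mkS n (repW φ n (p * Pw φ (FreeMonoid.of g))) := by
  have hFix : Fix n p := fun x hx => absurd x.isLt (by omega)
  cases g with
  | rho i =>
    refine ⟨1, Submonoid.one_mem _, ?_⟩
    rw [one_mul, mkS_of_rho, Pw_of_rho φ hr,
      repW_mul φ hr n (le_refl n) p hFix i.val (by have := i.isLt; omega)]
  | tau i =>
    obtain ⟨y, hy, hcomm⟩ := rho_word_comm (isRho_repW φ hr n p) (tE n i.val)
      (Submonoid.subset_closure (zel_adj_mem i))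
    refine ⟨y, hy, ?_⟩
    rw [mkS_of_tau, Pw_of_tau φ ht, mul_one, hcomm]
  | gam j =>
    obtain ⟨y, hy, hcomm⟩ := rho_word_comm (isRho_repW φ hr n p) (gamE n j)
      (Submonoid.subset_closure (Or.inr ⟨j, rfl⟩))
    refine ⟨y, hy, ?_⟩
    rw [mkS_of_gam, Pw_of_gam φ hg, mul_one, hcomm]
  | sig i =>
    obtain ⟨y, hy, hcomm⟩ := rho_word_comm (isRho_repW φ hr n p)
      (sE n i.val * rE n i.val) (Submonoid.subset_closure (lamBar_adj_mem i))
    refine ⟨y, hy, ?_⟩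
    rw [mkS_of_sig, Pw_of_sig φ hs]
    calc mkS n (repW φ n p) * sE n i.val
        = mkS n (repW φ n p) * ((sE n i.val * rE n i.val) * rE n i.val) := by
          rw [mul_assoc, rr1, mul_one]
      _ = (mkS n (repW φ n p) * (sE n i.val * rE n i.val)) * rE n i.val := by
          rw [← mul_assoc]
      _ = y * (mkS n (repW φ n p) * rE n i.val) := by rw [hcomm, mul_assoc]
      _ = y * mkS n (repW φ n (p * swn n i.val)) := by
          rw [repW_mul φ hr n (le_refl n) p hFix i.val (by have := i.isLt; omega)]
  | sigb i =>
    obtain ⟨y, hy, hcomm⟩ := rho_word_comm (isRho_repW φ hr n p)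
      (sbE n i.val * rE n i.val) (Submonoid.subset_closure (lam_adj_mem i))
    refine ⟨y, hy, ?_⟩
    rw [mkS_of_sigb, Pw_of_sigb φ hsb]
    calc mkS n (repW φ n p) * sbE n i.val
        = mkS n (repW φ n p) * ((sbE n i.val * rE n i.val) * rE n i.val) := by
          rw [mul_assoc, rr1, mul_one]
      _ = (mkS n (repW φ n p) * (sbE n i.val * rE n i.val)) * rE n i.val := by
          rw [← mul_assoc]
      _ = y * (mkS n (repW φ n p) * rE n i.val) := by rw [hcomm, mul_assoc]
      _ = y * mkS n (repW φ n (p * swn n i.val)) := by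
          rw [repW_mul φ hr n (le_refl n) p hFix i.val (by have := i.isLt; omega)]

include hs hsb hr ht hg in
theorem decomp : ∀ w : FM n, ∀ p : Equiv.Perm (Fin n),
    ∃ c ∈ Submonoid.closure (Sgen n),
      mkS n (repW φ n p) * mkS n w = c * mkS n (repW φ n (p * Pw φ w)) := by
  intro w
  induction w using FreeMonoid.recOn with
  | one =>
    intro p
    exact ⟨1, Submonoid.one_mem _, by rw [map_one, mul_one, map_one, mul_one, one_mul]⟩
  | of_mul g w ihw =>
    intro p
    obtain ⟨c0, hc0, h0⟩ := gen_step φ hs hsb hr ht hg p g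
    obtain ⟨c1, hc1, h1⟩ := ihw (p * Pw φ (FreeMonoid.of g))
    refine ⟨c0 * c1, Submonoid.mul_mem _ hc0 hc1, ?_⟩
    rw [map_mul (mkS n), ← mul_assoc, h0, mul_assoc, h1, ← mul_assoc,
      map_mul (Pw φ), ← mul_assoc]

end Final
end SingTVB
open SingTVB in
/-- the submonoid `M n = φ₃⁻¹(1)` of `STVB n` is generated, as a monoid, by
the elements `λ_{k,l}`, `λ̄_{k,l}`, `z_{k,l}` (`k ≠ l`) and the `γ_j`. -/
theorem stvm_generators (n : ℕ) (hn : 2 ≤ n) (φ : STVB n →* Equiv.Perm (Fin n))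
    (hs : ∀ i : Fin (n - 1), φ (sigE n i) = swp i)
    (hsb : ∀ i : Fin (n - 1), φ (sigbE n i) = swp i)
    (hr : ∀ i : Fin (n - 1), φ (rhoE n i) = swp i)
    (ht : ∀ i : Fin (n - 1), φ (tauE n i) = 1)
    (hg : ∀ j : Fin n, φ (gamE n j) = 1) :
    Submonoid.closure
      ({x : STVB n | ∃ k l : Fin n, k ≠ l ∧ (x = lam n k l ∨ x = lamBar n k l ∨ x = zel n k l)}
        ∪ Set.range (gamE n)) = MonoidHom.mker φ := by
  have hset : ({x : STVB n | ∃ k l : Fin n, k ≠ l ∧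
      (x = lam n k l ∨ x = lamBar n k l ∨ x = zel n k l)} ∪ Set.range (gamE n)) = Sgen n := rfl
  rw [hset]
  apply le_antisymm
  · rw [Submonoid.closure_le]
    rintro x (⟨k, l, hkl, (rfl | rfl | rfl)⟩ | ⟨j, rfl⟩)
    · exact MonoidHom.mem_mker.mpr (phi_lam φ hsb hr k l)
    · exact MonoidHom.mem_mker.mpr (phi_lamBar φ hs hr k l)
    · exact MonoidHom.mem_mker.mpr (phi_zel φ hr ht k l)
    · exact MonoidHom.mem_mker.mpr (hg j)
  · intro x hx
    obtain ⟨w, hw⟩ := PresentedMonoid.surjective_mk (rels := Rel n) x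
    have hφ : Pw φ w = 1 := by
      have h1 : φ x = 1 := MonoidHom.mem_mker.mp hx
      rw [← hw] at h1
      exact h1
    obtain ⟨c, hc, hdec⟩ := decomp φ hs hsb hr ht hg w 1
    rw [one_mul, hφ, repW_one φ hr n (le_refl n)] at hdec
    rw [map_one, mul_one, one_mul] at hdec
    rw [← hw]
    show mkS n w ∈ _
    rw [hdec]
    exact hc
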